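/- Let Λ be a ring and consider a commutative diagram of Λ-modules with exact rows: T ↪ B ↠ B/T (canonical inclusion and projection) and S ↪ A ↠ A/S (canonical inclusion and projection), together with maps e₁ : T → B', e₃ : B' → S, e₂ : B/T → A', e₄ : A' → A/S such that e₃ ∘ e₁ realizes a short exact sequence 0 → T → B' → S → 0 and e₄ ∘ e₂ realizes a short exact sequence 0 → B/T → A' → A/S → 0 (i.e., the columns T → B' → S and B/T → A' → A/S are short exact). Let Y = (B ⊕ B')/{(u_T(t), e₁(t)) : t ∈ T} be the pushout of T → B and T → B', and let X = {(a, a') ∈ A ⊕ A' : q_S(a) = e₄(a')} be the pullback of A → A/S ← A'. Then there is an exact sequence of Λ-modules 0 → T → Y → X → A/S → 0. -/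
import Mathlib


/-- Given submodules `T ≤ B`, `S ≤ A`, modules `B'`, `A'` and short
exact columns `0 → T → B' → S → 0` (via `e₁`, `e₃`) and `0 → B/T → A' → A/S → 0`
(via `e₂`, `e₄`), form the pushout `Y = (B ⊕ B')/{(t, e₁ t)}` and the pullback
`X = {(a, a') : q_S a = e₄ a'}`.  Then there is an exact sequence of `Λ`-modules
`0 → T → Y → X → A/S → 0`, where `T → Y` is `t ↦ [(t, 0)]` and `X → A/S` is
`(a, a') ↦ q_S a`. -/
theorem stmt_4 (Λ : Type*) [Ring Λ] (A B B' A' : Type*)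
    [AddCommGroup A] [Module Λ A] [AddCommGroup B] [Module Λ B]
    [AddCommGroup B'] [Module Λ B'] [AddCommGroup A'] [Module Λ A']
    (T : Submodule Λ B) (S : Submodule Λ A)
    (e₁ : T →ₗ[Λ] B') (e₃ : B' →ₗ[Λ] S)
    (he₁ : Function.Injective e₁) (he₃ : Function.Surjective e₃)
    (hcol₁ : Function.Exact e₁ e₃)
    (e₂ : (B ⧸ T) →ₗ[Λ] A') (e₄ : A' →ₗ[Λ] (A ⧸ S))
    (he₂ : Function.Injective e₂) (he₄ : Function.Surjective e₄)
    (hcol₂ : Function.Exact e₂ e₄) :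
    -- the pushout `Y` and the pullback `X`
    let D : Submodule Λ (B × B') := LinearMap.range ((T.subtype).prod e₁)
    let Y := (B × B') ⧸ D
    let X : Submodule Λ (A × A') :=
      LinearMap.ker ((S.mkQ ∘ₗ LinearMap.fst Λ A A') - (e₄ ∘ₗ LinearMap.snd Λ A A'))
    let g₁ : T →ₗ[Λ] Y := D.mkQ ∘ₗ (LinearMap.inl Λ B B') ∘ₗ T.subtype
    let g₃ : X →ₗ[Λ] (A ⧸ S) := S.mkQ ∘ₗ (LinearMap.fst Λ A A') ∘ₗ X.subtype
    ∃ g₂ : Y →ₗ[Λ] X,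
      Function.Injective g₁ ∧ Function.Surjective g₃ ∧
      Function.Exact g₁ g₂ ∧ Function.Exact g₂ g₃ := by
  intro D Y X g₁ g₃
  have hXmem : ∀ x : A × A', x ∈ X ↔ S.mkQ x.1 = e₄ x.2 := by
    intro x
    simp only [X, LinearMap.mem_ker, LinearMap.sub_apply, LinearMap.comp_apply,
      LinearMap.fst_apply, LinearMap.snd_apply, sub_eq_zero]
  -- the map B × B' → A × A', (b, b') ↦ (e₃ b', e₂ (q_T b))
  have hmem : ∀ p : B × B',
      (((e₃ p.2 : A), e₂ (T.mkQ p.1)) : A × A') ∈ X := by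
    intro p
    rw [hXmem]
    have h1 : S.mkQ ((e₃ p.2 : A)) = 0 := (Submodule.Quotient.mk_eq_zero S).2 (e₃ p.2).2
    have h2 : e₄ (e₂ (T.mkQ p.1)) = 0 := hcol₂.apply_apply_eq_zero _
    rw [h1, h2]
  let φ' : (B × B') →ₗ[Λ] X :=
    (((S.subtype ∘ₗ e₃) ∘ₗ LinearMap.snd Λ B B').prod
      ((e₂ ∘ₗ T.mkQ) ∘ₗ LinearMap.fst Λ B B')).codRestrict X (fun p => hmem p)
  have hφ'_apply : ∀ p : B × B', (φ' p : A × A') = ((e₃ p.2 : A), e₂ (T.mkQ p.1)) :=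
    fun p => rfl
  have hD : D ≤ LinearMap.ker φ' := by
    rintro p ⟨t, rfl⟩
    rw [LinearMap.mem_ker]
    apply Subtype.ext
    rw [hφ'_apply]
    have hsub : (T.subtype.prod e₁) t = ((t : B), e₁ t) := rfl
    rw [hsub]
    have h1 : e₃ (e₁ t) = 0 := hcol₁.apply_apply_eq_zero t
    have h2 : T.mkQ (t : B) = 0 := (Submodule.Quotient.mk_eq_zero T).2 t.2
    simp only [h1, h2, map_zero, ZeroMemClass.coe_zero, Prod.mk_eq_zero, and_self]
  set g₂ : Y →ₗ[Λ] X := D.liftQ φ' hD with hg₂def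
  have hg₂ : ∀ p : B × B', (g₂ (D.mkQ p) : A × A') = ((e₃ p.2 : A), e₂ (T.mkQ p.1)) :=
    fun p => rfl
  have hg₁ : ∀ t : T, g₁ t = D.mkQ ((t : B), (0 : B')) := fun t => rfl
  have hg₃ : ∀ x : X, g₃ x = S.mkQ (x : A × A').1 := fun x => rfl
  refine ⟨g₂, ?_, ?_, ?_, ?_⟩
  · -- injectivity of g₁
    intro t t' h
    rw [hg₁, hg₁] at h
    have hmemD : (((t : B), (0 : B')) - ((t' : B), (0 : B'))) ∈ D :=
      (Submodule.Quotient.eq D).1 h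
    obtain ⟨s, hs⟩ := hmemD
    have h1 : (s : B) = (t : B) - (t' : B) := by
      have := congrArg Prod.fst hs; simpa using this
    have h2 : e₁ s = 0 := by
      have := congrArg Prod.snd hs; simpa using this
    have hs0 : s = 0 := he₁ (by rw [h2, map_zero])
    rw [hs0, Submodule.coe_zero] at h1
    exact Subtype.ext (sub_eq_zero.mp h1.symm)
  · -- surjectivity of g₃
    intro c
    obtain ⟨a', ha'⟩ := he₄ c
    obtain ⟨a, ha⟩ := S.mkQ_surjective c
    refine ⟨⟨(a, a'), (hXmem _).2 (by rw [ha, ha'])⟩, ?_⟩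
    rw [hg₃]; exact ha
  · -- exactness at Y
    intro y
    rw [Set.mem_range]
    constructor
    · intro h
      obtain ⟨p, rfl⟩ := D.mkQ_surjective y
      have h0 : (g₂ (D.mkQ p) : A × A') = 0 := by rw [h]; rfl
      rw [hg₂] at h0
      have h1 : ((e₃ p.2 : S) : A) = 0 := congrArg Prod.fst h0
      have h2 : e₂ (T.mkQ p.1) = 0 := congrArg Prod.snd h0
      have hp1 : T.mkQ p.1 = 0 := he₂ (by rw [h2, map_zero])
      have hp1' : p.1 ∈ T := (Submodule.Quotient.mk_eq_zero T).1 hp1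
      have he3 : e₃ p.2 = 0 := Subtype.ext h1
      obtain ⟨t, ht⟩ := (hcol₁ p.2).1 he3
      refine ⟨⟨p.1, hp1'⟩ - t, ?_⟩
      rw [hg₁, Submodule.mkQ_apply, Submodule.mkQ_apply, Submodule.Quotient.eq]
      refine ⟨-t, ?_⟩
      have hneg : (T.subtype.prod e₁) (-t) = (-(t : B), e₁ (-t)) := rfl
      rw [hneg, map_neg, ht, Prod.ext_iff]
      refine ⟨?_, ?_⟩
      · simp only [Prod.fst_sub, AddSubgroupClass.coe_sub]
        show -(t : B) = p.1 - (t : B) - p.1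
        abel
      · simp only [Prod.snd_sub]
        show -p.2 = 0 - p.2
        rw [zero_sub]
    · rintro ⟨t, rfl⟩
      apply Subtype.ext
      rw [hg₁, hg₂ ((t : B), (0 : B'))]
      have h2 : T.mkQ (t : B) = 0 := (Submodule.Quotient.mk_eq_zero T).2 t.2
      show (((e₃ 0 : S) : A), e₂ (T.mkQ (t : B))) = (0 : A × A')
      rw [h2, map_zero, map_zero]
      rfl
  · -- exactness at X
    intro x
    rw [Set.mem_range]
    constructor
    · intro h
      rw [hg₃] at h
      have hker : S.mkQ (x : A × A').1 = e₄ (x : A × A').2 := (hXmem _).1 x.2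
      have hx2 : e₄ (x : A × A').2 = 0 := by rw [← hker, h]
      obtain ⟨β, hβ⟩ := (hcol₂ _).1 hx2
      obtain ⟨b, rfl⟩ := T.mkQ_surjective β
      have hx1S : (x : A × A').1 ∈ S := (Submodule.Quotient.mk_eq_zero S).1 h
      obtain ⟨b', hb'⟩ := he₃ ⟨(x : A × A').1, hx1S⟩
      refine ⟨D.mkQ (b, b'), ?_⟩
      apply Subtype.ext
      rw [hg₂ (b, b')]
      show (((e₃ b' : S) : A), e₂ (T.mkQ b)) = (x : A × A')
      rw [hb', hβ]
    · rintro ⟨y, rfl⟩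
      obtain ⟨p, rfl⟩ := D.mkQ_surjective y
      rw [hg₃]
      have : ((g₂ (D.mkQ p) : A × A')).1 = (e₃ p.2 : A) := by rw [hg₂ p]
      rw [this]
      exact (Submodule.Quotient.mk_eq_zero S).2 (e₃ p.2).2
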